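/- Let X be a locally compact Polish space, Y a Hausdorff space, f : X → Y a continuous bijection, and Z = { y ∈ Y : there exists an open neighborhood C of y with the closure of f⁻¹(C) compact }. Then the restriction of f to W := f⁻¹(Z) is a homeomorphism from W (with subspace topology of X) onto Z (with subspace topology of Y), and Z with this topology is a locally compact Polish space. -/

import Mathlib

theorem stmt_8 {X Y : Type*} [TopologicalSpace X] [PolishSpace X]
    [LocallyCompactSpace X] [TopologicalSpace Y] [T2Space Y]
    (f : X → Y) (hf : Continuous f) (hbij : Function.Bijective f)
    (Z : Set Y)
    (hZ : Z = {y : Y | ∃ C : Set Y, IsOpen C ∧ y ∈ C ∧ IsCompact (closure (f ⁻¹' C))}) :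
    (∃ h : (f ⁻¹' Z) ≃ₜ Z, ∀ x : f ⁻¹' Z, (h x : Y) = f x) ∧
      PolishSpace Z ∧ LocallyCompactSpace Z := by
  have hZopen : IsOpen Z := by
    rw [isOpen_iff_forall_mem_open]
    intro y hy
    rw [hZ] at hy
    obtain ⟨C, hC, hyC, hK⟩ := hy
    exact ⟨C, fun c hc => hZ ▸ ⟨C, hC, hc, hK⟩, hC, hyC⟩
  have hWopen : IsOpen (f ⁻¹' Z) := hZopen.preimage hf
  -- key: images of open subsets of W are open in Y
  have key : ∀ S : Set X, IsOpen S → IsOpen (f '' (S ∩ f ⁻¹' Z)) := by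
    intro S hS
    rw [isOpen_iff_forall_mem_open]
    rintro y ⟨x, ⟨hxS, hxW⟩, rfl⟩
    rw [Set.mem_preimage, hZ] at hxW
    obtain ⟨C, hCopen, hxC, hK⟩ := hxW
    have hT : IsCompact (f '' (closure (f ⁻¹' C) \ S)) := (hK.diff hS).image hf
    refine ⟨C \ f '' (closure (f ⁻¹' C) \ S), ?_, hCopen.sdiff hT.isClosed, hxC, ?_⟩
    · rintro z ⟨hzC, hzT⟩
      obtain ⟨w, rfl⟩ := hbij.2 z
      have hwK : w ∈ closure (f ⁻¹' C) := subset_closure hzC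
      have hwS : w ∈ S := by
        by_contra h
        exact hzT ⟨w, ⟨hwK, h⟩, rfl⟩
      exact ⟨w, ⟨hwS, by rw [Set.mem_preimage, hZ]; exact ⟨C, hCopen, hzC, hK⟩⟩, rfl⟩
    · rintro ⟨w, ⟨hwK, hwS⟩, hw⟩
      have : w = x := hbij.1 hw
      exact hwS (this ▸ hxS)
  -- the equivalence
  have hgbij : Function.Bijective (fun x : f ⁻¹' Z => (⟨f x, x.2⟩ : Z)) := by
    constructor
    · intro a b h
      exact Subtype.ext (hbij.1 (congrArg Subtype.val h))
    · rintro ⟨z, hz⟩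
      obtain ⟨x, rfl⟩ := hbij.2 z
      exact ⟨⟨x, hz⟩, rfl⟩
  let e : (f ⁻¹' Z) ≃ Z := Equiv.ofBijective _ hgbij
  have hcont : Continuous e := (hf.comp continuous_subtype_val).subtype_mk _
  have hopen : IsOpenMap e := by
    intro U hU
    rw [isOpen_induced_iff] at hU
    obtain ⟨S, hS, rfl⟩ := hU
    have himg : e '' (Subtype.val ⁻¹' S) = Subtype.val ⁻¹' (f '' (S ∩ f ⁻¹' Z)) := by
      ext ⟨z, hz⟩
      constructor
      · rintro ⟨⟨x, hxW⟩, hxS, hx⟩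
        have : f x = z := congrArg Subtype.val hx
        exact ⟨x, ⟨hxS, hxW⟩, this⟩
      · rintro ⟨x, ⟨hxS, hxW⟩, hx⟩
        exact ⟨⟨x, hxW⟩, hxS, Subtype.ext hx⟩
    rw [himg]
    exact (key S hS).preimage continuous_subtype_val
  let h : (f ⁻¹' Z) ≃ₜ Z := Equiv.toHomeomorphOfContinuousOpen e hcont hopen
  have hWpolish : PolishSpace (f ⁻¹' Z) := hWopen.polishSpace
  have hWlc : LocallyCompactSpace (f ⁻¹' Z) := hWopen.locallyCompactSpace
  refine ⟨⟨h, fun x => rfl⟩, h.symm.isClosedEmbedding.polishSpace, ?_⟩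
  exact h.symm.isOpenEmbedding.locallyCompactSpace
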